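/- Let a, b, c be real numbers with a > 0 and 4ac − b² > 0, and set D = (3a+c)(a+3c) − b², a₁ = a·((a+3c)² − 3b²)/D, b₁ = b·(3(a−c)² − b²)/D, c₁ = c·((3a+c)² − 3b²)/D. Then the integral over ℝ of 1/(a₁x² + b₁x + c₁) dx equals the integral over ℝ of 1/(ax² + bx + c) dx. -/

import Mathlib

open Real

lemma quad_integral_eq (a b c : ℝ) (ha : 0 < a) (hD : 0 < 4 * a * c - b ^ 2) :
    ∫ x : ℝ, 1 / (a * x ^ 2 + b * x + c) = 2 * π / Real.sqrt (4 * a * c - b ^ 2) := by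
  set s := Real.sqrt (4 * a * c - b ^ 2) with hs
  have hs0 : 0 < s := Real.sqrt_pos.2 hD
  have hs2 : s ^ 2 = 4 * a * c - b ^ 2 := Real.sq_sqrt hD.le
  have key : ∀ x : ℝ, 1 / (a * x ^ 2 + b * x + c)
      = (4 * a / s ^ 2) * (1 + (2 * a / s * x + b / s) ^ 2)⁻¹ := by
    intro x
    have h1 : a * x ^ 2 + b * x + c = (s ^ 2 / (4 * a)) * (1 + (2 * a / s * x + b / s) ^ 2) := by
      field_simp
      linear_combination (-1) * hs2
    rw [h1]
    rw [one_div, mul_inv, inv_div]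
  simp_rw [key]
  rw [MeasureTheory.integral_const_mul]
  have h3 : (∫ x : ℝ, (1 + (2 * a / s * x + b / s) ^ 2)⁻¹)
      = |(2 * a / s)⁻¹| • ∫ y : ℝ, (1 + (y + b / s) ^ 2)⁻¹ :=
    MeasureTheory.Measure.integral_comp_mul_left (fun y : ℝ => (1 + (y + b / s) ^ 2)⁻¹) (2 * a / s)
  have h4 : (∫ y : ℝ, (1 + (y + b / s) ^ 2)⁻¹) = ∫ y : ℝ, (1 + y ^ 2)⁻¹ :=
    MeasureTheory.integral_add_right_eq_self (fun y : ℝ => (1 + y ^ 2)⁻¹) (b / s)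
  rw [h3, h4, integral_univ_inv_one_add_sq]
  have habs : |(2 * a / s)⁻¹| = s / (2 * a) := by
    rw [abs_of_pos]
    · rw [inv_div]
    · positivity
  rw [habs, smul_eq_mul]
  field_simp
  ring

theorem landen_invariance (a b c : ℝ) (ha : 0 < a) (hD : 0 < 4 * a * c - b ^ 2)
    (D a₁ b₁ c₁ : ℝ)
    (hDdef : D = (3 * a + c) * (a + 3 * c) - b ^ 2)
    (ha₁ : a₁ = a * ((a + 3 * c) ^ 2 - 3 * b ^ 2) / D)
    (hb₁ : b₁ = b * (3 * (a - c) ^ 2 - b ^ 2) / D)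
    (hc₁ : c₁ = c * ((3 * a + c) ^ 2 - 3 * b ^ 2) / D) :
    ∫ x : ℝ, 1 / (a₁ * x ^ 2 + b₁ * x + c₁) = ∫ x : ℝ, 1 / (a * x ^ 2 + b * x + c) := by
  have hc : 0 < c := by nlinarith [sq_nonneg b]
  have hDpos : 0 < D := by rw [hDdef]; nlinarith [sq_nonneg (a - c)]
  have ha₁pos : 0 < a₁ := by
    rw [ha₁]
    apply div_pos _ hDpos
    apply mul_pos ha
    nlinarith [sq_nonneg (a - 3 * c)]
  have hdisc : 4 * a₁ * c₁ - b₁ ^ 2 = 4 * a * c - b ^ 2 := by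
    rw [ha₁, hb₁, hc₁]
    field_simp
    rw [hDdef]
    ring
  rw [quad_integral_eq a b c ha hD, quad_integral_eq a₁ b₁ c₁ ha₁pos (by rw [hdisc]; exact hD),
    hdisc]
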